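/- Under the hypotheses of the fractional harmonic oscillator (α ∈ (0,1], ξ_d > 0, m > 0, m̃² = m²/ξ_d, φ(t) = A cos(m̃ t^α/α) + B sin(m̃ t^α/α)), the regularized energy Ẽ(t) = ½ ξ_d t^{1-α} (φ'(t))² + ½ t^{α-1} m² φ(t)² − ½ m² (A²+B²) t^{α-1} is constant on (0,∞); in fact Ẽ(t) = 0 for all t > 0. -/

import Mathlib

/-- The regularized energy of the fractional harmonic oscillator vanishes
identically on `(0, ∞)`. -/
theorem fractional_oscillator_regularized_energy (α ξd m mt A B : ℝ)
    (hα : α ∈ Set.Ioc (0:ℝ) 1) (hξ : 0 < ξd) (hm : 0 < m)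
    (hmt : mt ^ 2 = m ^ 2 / ξd) :
    ∀ t : ℝ, 0 < t →
      (1/2) * ξd * t ^ (1 - α) *
          (deriv (fun u => A * Real.cos (mt * u ^ α / α)
            + B * Real.sin (mt * u ^ α / α)) t) ^ 2
        + (1/2) * t ^ (α - 1) * m ^ 2 *
          (A * Real.cos (mt * t ^ α / α)
            + B * Real.sin (mt * t ^ α / α)) ^ 2
        - (1/2) * m ^ 2 * (A ^ 2 + B ^ 2) * t ^ (α - 1) = 0 := by
  intro t ht
  have ht0 : t ≠ 0 := ne_of_gt ht
  have hα0 : α ≠ 0 := ne_of_gt hα.1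
  -- derivative of the inner function
  have hinner : HasDerivAt (fun u : ℝ => mt * u ^ α / α)
      (mt * t ^ (α - 1)) t := by
    have h1 : HasDerivAt (fun u : ℝ => u ^ α) (α * t ^ (α - 1)) t :=
      Real.hasDerivAt_rpow_const (Or.inl ht0)
    have h2 := (h1.const_mul mt).div_const α
    convert h2 using 1
    any_goals rfl
    field_simp
  have hcos : HasDerivAt (fun u : ℝ => A * Real.cos (mt * u ^ α / α))
      (A * (-Real.sin (mt * t ^ α / α) * (mt * t ^ (α - 1)))) t :=
    ((Real.hasDerivAt_cos _).comp t hinner).const_mul A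
  have hsin : HasDerivAt (fun u : ℝ => B * Real.sin (mt * u ^ α / α))
      (B * (Real.cos (mt * t ^ α / α) * (mt * t ^ (α - 1)))) t :=
    ((Real.hasDerivAt_sin _).comp t hinner).const_mul B
  have hd := (hcos.add hsin).deriv
  rw [show (fun u => A * Real.cos (mt * u ^ α / α) + B * Real.sin (mt * u ^ α / α)) =
    ((fun u => A * Real.cos (mt * u ^ α / α)) + fun u => B * Real.sin (mt * u ^ α / α)) from rfl, hd]
  set c := Real.cos (mt * t ^ α / α)
  set s := Real.sin (mt * t ^ α / α)
  have hcs : c ^ 2 + s ^ 2 = 1 := by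
    exact Real.cos_sq_add_sin_sq (mt * t ^ α / α)
  have hpow : t ^ (1 - α) * (t ^ (α - 1)) ^ 2 = t ^ (α - 1) := by
    rw [← Real.rpow_natCast (t ^ (α - 1)) 2, ← Real.rpow_mul ht.le,
      ← Real.rpow_add ht]
    ring_nf
  have hmm : ξd * mt ^ 2 = m ^ 2 := by
    rw [hmt]; field_simp
  have expand :
      (1/2) * ξd * t ^ (1 - α) *
        (A * (-s * (mt * t ^ (α - 1))) + B * (c * (mt * t ^ (α - 1)))) ^ 2
      + (1/2) * t ^ (α - 1) * m ^ 2 * (A * c + B * s) ^ 2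
      - (1/2) * m ^ 2 * (A ^ 2 + B ^ 2) * t ^ (α - 1)
      = (1/2) * (ξd * mt ^ 2) * (t ^ (1 - α) * (t ^ (α - 1)) ^ 2)
          * (A * s - B * c) ^ 2
        + (1/2) * t ^ (α - 1) * m ^ 2 * (A * c + B * s) ^ 2
        - (1/2) * m ^ 2 * (A ^ 2 + B ^ 2) * t ^ (α - 1) := by ring
  rw [expand, hmm, hpow]
  linear_combination (1/2 * m ^ 2 * t ^ (α - 1) * (A ^ 2 + B ^ 2)) * hcs
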